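/- Assume the Agent's recursion H_T = Θ(P_{0:T}), H_t = esssup_{A ∈ L^0(ℱ_t)^N} { U^a_t(H_{t+1} + β_t A·ΔP̃_{t+1}) − c_t(A) } and the Principal's recursion h_T = 0, h_t = esssup over triples (β,A,Γ) with (A,Γ) ∈ C_t(β) of { U^a_t(Γ) − c_t(A) + U^p_t(h_{t+1} + A·ΔP̃_{t+1} − Γ) } admit solutions with all essential suprema attained at every t ∈ {0,…,T−1}. Then the Principal's optimal time-0 utility over incentive-compatible and individually rational contracts equals W_0 − R + h_0. Moreover, denoting by (β_t, A_t, Γ_{t+1})_{t<T} maximizers attaining h in the Principal's recursion and setting Θ := Σ_{t<T} [ Γ_{t+1} − U^a_t(Γ_{t+1}) + c_t(A_t) ], the contract S(Ā) = R + Θ + Σ_{t<T} β_t ( ΔW^Ā_{t+1} − A_t·ΔP̃_{t+1} ) is optimal for the Principal among incentive-compatible and individually rational contracts, the Agent's optimal effort under this contract is A = (A_t), and his optimal time-0 utility equals R. -/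

import Mathlib

open MeasureTheory Filter
open scoped ENNReal

variable {Ω : Type*}

section Defs
variable {m0 : MeasurableSpace Ω} {N : ℕ}

/-- The conditional expectation `E[|X| | F] ∈ [0,∞]`, via monotone truncation. -/
noncomputable def condExpAbs (μ : Measure Ω) (F : MeasurableSpace Ω) (X : Ω → ℝ) :
    Ω → ℝ≥0∞ :=
  fun ω => ⨆ n : ℕ, ENNReal.ofReal ((μ[fun ω' => min |X ω'| (n : ℝ) | F]) ω)

/-- `X ∈ L^1_F`: the conditional expectation `E[|X| | F]` is a.s. finite. -/
def MemCondL1 (μ : Measure Ω) (F : MeasurableSpace Ω) (X : Ω → ℝ) : Prop :=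
  ∀ᵐ ω ∂μ, condExpAbs μ F X ω < ⊤

end Defs

/-- The relative price increment `ΔP̃_{t+1} = diag(P_t)⁻¹(P_{t+1} − P_t)`. -/
noncomputable def relIncr {N : ℕ} (P : ℕ → Ω → Fin N → ℝ) (t : ℕ) (i : Fin N) (ω : Ω) : ℝ :=
  (P (t + 1) ω i - P t ω i) / P t ω i

/-- The wealth `W^A_t = W₀ + Σ_{s<t} A_s·ΔP̃_{s+1}` generated by the effort process `A`. -/
noncomputable def wealth {N : ℕ} (P : ℕ → Ω → Fin N → ℝ) (W0 : ℝ)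
    (A : ℕ → Ω → Fin N → ℝ) (t : ℕ) (ω : Ω) : ℝ :=
  W0 + ∑ s ∈ Finset.range t, ∑ i, A s ω i * relIncr P s i ω

/-- The payment of the contract `S(Ā) = R + Θ + Σ_{t<T} β_t (ΔW^Ā_{t+1} − A_t·ΔP̃_{t+1})`
to the Agent for the effort process `Ā`. -/
noncomputable def contractPay {N : ℕ} (P : ℕ → Ω → Fin N → ℝ) (T : ℕ) (R : ℝ)
    (Θ : Ω → ℝ) (β : ℕ → Ω → ℝ) (A : ℕ → Ω → Fin N → ℝ)
    (Abar : ℕ → Ω → Fin N → ℝ) (ω : Ω) : ℝ :=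
  R + Θ ω + ∑ t ∈ Finset.range T, β t ω * ∑ i, (Abar t ω i - A t ω i) * relIncr P t i ω

/-- The usual conditions on a family of utility functionals
`U_t : L⁰(ℱ_T) → L⁰(ℱ_t) ∪ {−∞}`: normalized, proper, monotone, `ℱ_t`-conditionally
concave, `ℱ_t`-translation invariant, and time consistent. -/
structure UsualFamily {m0 : MeasurableSpace Ω} (μ : Measure Ω)
    (ℱ : ℕ → MeasurableSpace Ω) (T : ℕ) (U : ℕ → (Ω → ℝ) → Ω → EReal) : Prop where
  meas : ∀ t ≤ T, ∀ X : Ω → ℝ, Measurable[ℱ T] X → Measurable[ℱ t] (U t X)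
  normalized : ∀ t ≤ T, ∀ᵐ ω ∂μ, U t (fun _ => 0) ω = 0
  properTop : ∀ t ≤ T, ∀ X : Ω → ℝ, Measurable[ℱ T] X → ∀ᵐ ω ∂μ, U t X ω ≠ ⊤
  properBot : ∀ t ≤ T, ∃ X' : Ω → ℝ, Measurable[ℱ T] X' ∧ ∀ᵐ ω ∂μ, U t X' ω ≠ ⊥
  mono : ∀ t ≤ T, ∀ X Y : Ω → ℝ, Measurable[ℱ T] X → Measurable[ℱ T] Y →
    (∀ᵐ ω ∂μ, Y ω ≤ X ω) → ∀ᵐ ω ∂μ, U t Y ω ≤ U t X ω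
  concave : ∀ t ≤ T, ∀ X Y : Ω → ℝ, Measurable[ℱ T] X → Measurable[ℱ T] Y →
    ∀ lam : Ω → ℝ, Measurable[ℱ t] lam → (∀ᵐ ω ∂μ, lam ω ∈ Set.Icc (0 : ℝ) 1) →
    ∀ᵐ ω ∂μ, ((lam ω : ℝ) : EReal) * U t X ω + (((1 - lam ω) : ℝ) : EReal) * U t Y ω ≤
      U t (fun ω' => lam ω' * X ω' + (1 - lam ω') * Y ω') ω
  transInv : ∀ t ≤ T, ∀ X Y : Ω → ℝ, Measurable[ℱ T] X → Measurable[ℱ t] Y →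
    ∀ᵐ ω ∂μ, U t (fun ω' => X ω' + Y ω') ω = U t X ω + ((Y ω : ℝ) : EReal)
  timeConsistent : ∀ t, t + 1 ≤ T → ∀ X Y : Ω → ℝ,
    Measurable[ℱ T] X → Measurable[ℱ T] Y →
    (∀ᵐ ω ∂μ, U (t + 1) Y ω ≤ U (t + 1) X ω) → ∀ᵐ ω ∂μ, U t Y ω ≤ U t X ω

/-- A solution of the Agent's recursion
`H_T = Θ'`, `H_t = esssup_{a ∈ L⁰(ℱ_t)^N} { Uᵃ_t(H_{t+1} + β'_t a·ΔP̃_{t+1}) − c_t(a) }`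
for the contract `(Θ', β')`, with all essential suprema attained at `Ahat`; in particular
the contract `(Θ', β')` is incentive compatible, with recommended effort process `Ahat`. -/
structure AgentSolution {m0 : MeasurableSpace Ω} {N : ℕ} (μ : Measure Ω)
    (ℱ : ℕ → MeasurableSpace Ω) (T : ℕ) (P : ℕ → Ω → Fin N → ℝ)
    (Ua : ℕ → (Ω → ℝ) → Ω → EReal) (c : ℕ → (Fin N → ℝ) → ℝ)
    (Θ' : Ω → ℝ) (β' : ℕ → Ω → ℝ) (H : ℕ → Ω → ℝ)
    (Ahat : ℕ → Ω → Fin N → ℝ) : Prop where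
  measH : ∀ t ≤ T, Measurable[ℱ t] (H t)
  measA : ∀ t < T, Measurable[ℱ t] (Ahat t)
  terminal : H T =ᵐ[μ] Θ'
  upperBound : ∀ t < T, ∀ a : Ω → Fin N → ℝ, Measurable[ℱ t] a →
    ∀ᵐ ω ∂μ,
      Ua t (fun ω' => H (t + 1) ω' + β' t ω' * ∑ i, a ω' i * relIncr P t i ω') ω +
          ((-(c t (a ω)) : ℝ) : EReal) ≤ ((H t ω : ℝ) : EReal)
  attained : ∀ t < T, ∀ᵐ ω ∂μ,
    Ua t (fun ω' => H (t + 1) ω' + β' t ω' * ∑ i, Ahat t ω' i * relIncr P t i ω') ω +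
        ((-(c t (Ahat t ω)) : ℝ) : EReal) = ((H t ω : ℝ) : EReal)

/-- The time-`t` incentive-compatibility set `C_t(β)`. -/
def MemIC {m0 : MeasurableSpace Ω} {N : ℕ} (μ : Measure Ω)
    (ℱ : ℕ → MeasurableSpace Ω) (P : ℕ → Ω → Fin N → ℝ)
    (Ua : ℕ → (Ω → ℝ) → Ω → EReal) (c : ℕ → (Fin N → ℝ) → ℝ)
    (t : ℕ) (β : Ω → ℝ) (a : Ω → Fin N → ℝ) (g : Ω → ℝ) : Prop :=
  Measurable[ℱ t] a ∧ Measurable[ℱ (t + 1)] g ∧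
    ∀ abar : Ω → Fin N → ℝ, Measurable[ℱ t] abar →
      ∀ᵐ ω ∂μ,
        Ua t (fun ω' => g ω' + β ω' * ∑ i, (abar ω' i - a ω' i) * relIncr P t i ω') ω +
            ((-(c t (abar ω)) : ℝ) : EReal) ≤
          Ua t g ω + ((-(c t (a ω)) : ℝ) : EReal)

/-- The objective of the Principal's one-step problem at time `t`:
`Uᵃ_t(Γ) − c_t(A) + Uᵖ_t(h_{t+1} + A·ΔP̃_{t+1} − Γ)`. -/
noncomputable def principalVal {N : ℕ} (P : ℕ → Ω → Fin N → ℝ)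
    (Ua Up : ℕ → (Ω → ℝ) → Ω → EReal) (c : ℕ → (Fin N → ℝ) → ℝ) (h : ℕ → Ω → ℝ)
    (t : ℕ) (a : Ω → Fin N → ℝ) (g : Ω → ℝ) (ω : Ω) : EReal :=
  Ua t g ω + ((-(c t (a ω)) : ℝ) : EReal) +
    Up t (fun ω' => h (t + 1) ω' + (∑ i, a ω' i * relIncr P t i ω') - g ω') ω


/-! ### Auxiliary lemmas -/

private lemma ereal_coe_add_le_iff {a b : ℝ} {x : EReal} :
    (a : EReal) + x ≤ (b : EReal) ↔ x ≤ ((b - a : ℝ) : EReal) := by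
  induction x using EReal.rec with
  | bot => simp [EReal.add_bot]
  | coe r =>
    rw [← EReal.coe_add, EReal.coe_le_coe_iff, EReal.coe_le_coe_iff]
    constructor <;> intro <;> linarith
  | top => simp [EReal.coe_add_top, top_le_iff, ← EReal.coe_sub]

private lemma ereal_coe_add_eq {a b : ℝ} {x : EReal} (h : (a : EReal) + x = (b : EReal)) :
    x = ((b - a : ℝ) : EReal) := by
  induction x using EReal.rec with
  | bot => rw [EReal.add_bot] at h; exact absurd h (by simp)
  | coe r => rw [← EReal.coe_add, EReal.coe_eq_coe_iff] at h
             rw [EReal.coe_eq_coe_iff]; linarith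
  | top => rw [EReal.coe_add_top] at h; exact absurd h.symm (EReal.coe_ne_top b)

private lemma ereal_add_neg_coe_eq {x : EReal} {a m : ℝ}
    (h : x + ((-a : ℝ) : EReal) = (m : EReal)) : x = ((m + a : ℝ) : EReal) := by
  have h2 : x + ((-a:ℝ):EReal) + (a:EReal) = (m:EReal) + (a:EReal) := by rw [h]
  rw [add_assoc, ← EReal.coe_add] at h2
  simpa using h2

private lemma usual_eval {Ω : Type*} {m0 : MeasurableSpace Ω} {μ : Measure Ω}
    {ℱ : ℕ → MeasurableSpace Ω} {T : ℕ} {U : ℕ → (Ω → ℝ) → Ω → EReal}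
    (hU : UsualFamily μ ℱ T U) {t : ℕ} (ht : t ≤ T) {Y : Ω → ℝ}
    (hY : Measurable[ℱ t] Y) : ∀ᵐ ω ∂μ, U t Y ω = ((Y ω : ℝ) : EReal) := by
  have h1 := hU.transInv t ht (fun _ => 0) Y measurable_const hY
  have he : (fun ω' => (fun _ : Ω => (0:ℝ)) ω' + Y ω') = Y := by funext ω'; simp
  rw [he] at h1
  filter_upwards [h1, hU.normalized t ht] with ω e1 e2
  rw [e1, e2, zero_add]

private lemma usual_tcEq {Ω : Type*} {m0 : MeasurableSpace Ω} {μ : Measure Ω}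
    {ℱ : ℕ → MeasurableSpace Ω} {T : ℕ} {U : ℕ → (Ω → ℝ) → Ω → EReal}
    (hU : UsualFamily μ ℱ T U) {t : ℕ} (ht : t + 1 ≤ T) {X Y : Ω → ℝ}
    (hX : Measurable[ℱ T] X) (hY : Measurable[ℱ T] Y)
    (hEq : ∀ᵐ ω ∂μ, U (t+1) Y ω = U (t+1) X ω) : ∀ᵐ ω ∂μ, U t Y ω = U t X ω := by
  have h1 := hU.timeConsistent t ht X Y hX hY (hEq.mono fun ω e => e.le)
  have h2 := hU.timeConsistent t ht Y X hY hX (hEq.mono fun ω e => e.ge)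
  filter_upwards [h1, h2] with ω e1 e2; exact le_antisymm e1 e2

private lemma downward_induction {T : ℕ} {Q : ℕ → Prop} (base : Q T)
    (step : ∀ t, t < T → Q (t+1) → Q t) : ∀ t, t ≤ T → Q t := by
  have key : ∀ n t, t ≤ T → T - t ≤ n → Q t := by
    intro n
    induction n with
    | zero =>
      intro t ht hn
      have h' : t = T := by omega
      subst h'; exact base
    | succ n ih =>
      intro t ht hn
      rcases eq_or_lt_of_le ht with rfl | hlt
      · exact base
      · exact step t hlt (ih (t+1) hlt (by omega))
  exact fun t ht => key T t ht (by omega)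

/-- (Theorem 2.5 of the paper.)  Assume the Agent's recursion and the
Principal's recursion admit solutions with all essential suprema attained at every
`t ∈ {0,…,T−1}`.  Then the Principal's optimal time-0 utility over incentive-compatible and
individually rational contracts equals `W₀ − R + h₀`.  Moreover, for maximizers
`(β_t, A_t, Γ_{t+1})_{t<T}` of the Principal's recursion and
`Θ := Σ_{t<T} [Γ_{t+1} − Uᵃ_t(Γ_{t+1}) + c_t(A_t)]`, the contract
`S(Ā) = R + Θ + Σ_{t<T} β_t (ΔW^Ā_{t+1} − A_t·ΔP̃_{t+1})` is optimal for the Principal among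
incentive-compatible and individually rational contracts, the Agent's optimal effort under
this contract is `A = (A_t)`, and his optimal time-0 utility equals `R`. -/
theorem principal_agent_dynamic_solution
    {m0 : MeasurableSpace Ω} (μ : Measure Ω) [IsProbabilityMeasure μ]
    (T N : ℕ) (hT : 0 < T)
    (ℱ : ℕ → MeasurableSpace Ω) (hmono : ∀ s t, s ≤ t → ℱ s ≤ ℱ t) (hFT : ℱ T ≤ m0)
    -- the price process: strictly positive, generating the filtration, `E[P_{t+1}|ℱ_t]` finite
    (P : ℕ → Ω → Fin N → ℝ)
    (hPgen : ∀ t ≤ T, ℱ t = ⨆ s ∈ Set.Iic t,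
      MeasurableSpace.comap (fun ω => P s ω) inferInstance)
    (hPadapted : ∀ t ≤ T, Measurable[ℱ t] (P t))
    (hPpos : ∀ t ≤ T, ∀ᵐ ω ∂μ, ∀ i, 0 < P t ω i)
    (hPint : ∀ t < T, ∀ i, MemCondL1 μ (ℱ t) (fun ω => P (t + 1) ω i))
    -- strictly convex costs
    (c : ℕ → (Fin N → ℝ) → ℝ) (hc : ∀ t < T, StrictConvexOn ℝ Set.univ (c t))
    -- the Agent's and the Principal's utility families satisfy the usual conditions
    (Ua Up : ℕ → (Ω → ℝ) → Ω → EReal)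
    (hUa : UsualFamily μ ℱ T Ua) (hUp : UsualFamily μ ℱ T Up)
    (W0 R : ℝ)
    -- a solution `h` of the Principal's recursion, with maximizers `(β_t, A_t, Γ_{t+1})`:
    (h : ℕ → Ω → ℝ) (hhmeas : ∀ t ≤ T, Measurable[ℱ t] (h t))
    (hhT : h T =ᵐ[μ] fun _ => (0 : ℝ))
    (β : ℕ → Ω → ℝ) (A : ℕ → Ω → Fin N → ℝ) (Γ : ℕ → Ω → ℝ)
    (hβ : ∀ t < T, Measurable[ℱ t] (β t))
    (hA : ∀ t < T, Measurable[ℱ t] (A t))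
    (hΓ : ∀ t < T, Measurable[ℱ (t + 1)] (Γ (t + 1)))
    (hfeas : ∀ t, t < T → MemIC μ ℱ P Ua c t (β t) (A t) (Γ (t + 1)))
    (hdomin : ∀ t, t < T → ∀ b : Ω → ℝ, Measurable[ℱ t] b →
      ∀ a : Ω → Fin N → ℝ, ∀ g : Ω → ℝ, MemIC μ ℱ P Ua c t b a g →
      ∀ᵐ ω ∂μ, principalVal P Ua Up c h t a g ω ≤ ((h t ω : ℝ) : EReal))
    (hattain : ∀ t, t < T →
      ∀ᵐ ω ∂μ, principalVal P Ua Up c h t (A t) (Γ (t + 1)) ω = ((h t ω : ℝ) : EReal)) :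
    -- with `Θ := Σ_{t<T} [Γ_{t+1} − Uᵃ_t(Γ_{t+1}) + c_t(A_t)]` and the contract
    -- `S(Ā) := R + Θ + Σ_{t<T} β_t (ΔW^Ā_{t+1} − A_t·ΔP̃_{t+1})`:
    (fun Θ : Ω → ℝ => fun S : (ℕ → Ω → Fin N → ℝ) → Ω → ℝ =>
      -- (1) `S`, written in standard lump-sum form, is incentive compatible with
      --     recommended effort `A`, and the Agent's optimal time-0 utility equals `R`
      --     (so the individual rationality constraint binds);
      ((∃ H : ℕ → Ω → ℝ,
          AgentSolution μ ℱ T P Ua c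
            (fun ω => R + Θ ω - ∑ t ∈ Finset.range T,
              β t ω * ∑ i, A t ω i * relIncr P t i ω) β H A ∧
          H 0 =ᵐ[μ] fun _ => R) ∧
      -- (2) the Agent's optimal effort under `S` is `A`, with optimal time-0 utility `R`:
      --     any adapted effort `Ā` gives him at most `R`, and `A` attains `R`;
      (∀ Abar : ℕ → Ω → Fin N → ℝ, (∀ t < T, Measurable[ℱ t] (Abar t)) →
        ∀ᵐ ω ∂μ,
          Ua 0 (fun ω' => S Abar ω' - ∑ t ∈ Finset.range T, c t (Abar t ω')) ω ≤
            ((R : ℝ) : EReal)) ∧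
      (∀ᵐ ω ∂μ,
        Ua 0 (fun ω' => S A ω' - ∑ t ∈ Finset.range T, c t (A t ω')) ω =
          ((R : ℝ) : EReal)) ∧
      -- (3) the Principal's time-0 utility from `S` (with the Agent playing `A`) equals
      --     `W₀ − R + h₀`;
      (∀ᵐ ω ∂μ,
        Up 0 (fun ω' => wealth P W0 A T ω' - S A ω') ω =
          ((W0 - R + h 0 ω : ℝ) : EReal)) ∧
      -- (4) `S` is optimal: every incentive-compatible and individually rational contract
      --     `(Θ'', β'')`, under the corresponding Agent-optimal effort, gives the Principal
      --     a time-0 utility of at most `W₀ − R + h₀`.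
      (∀ Θ'' : Ω → ℝ, Measurable[ℱ T] Θ'' →
        ∀ β'' : ℕ → Ω → ℝ, (∀ t < T, Measurable[ℱ t] (β'' t)) →
        ∀ H'' : ℕ → Ω → ℝ, ∀ Ahat'' : ℕ → Ω → Fin N → ℝ,
        AgentSolution μ ℱ T P Ua c Θ'' β'' H'' Ahat'' →
        (∀ᵐ ω ∂μ, R ≤ H'' 0 ω) →
        ∀ᵐ ω ∂μ,
          Up 0 (fun ω' => wealth P W0 Ahat'' T ω' -
              (Θ'' ω' + ∑ t ∈ Finset.range T,
                β'' t ω' * ∑ i, Ahat'' t ω' i * relIncr P t i ω')) ω ≤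
            ((W0 - R + h 0 ω : ℝ) : EReal))))
      (fun ω => ∑ t ∈ Finset.range T,
        (Γ (t + 1) ω - (Ua t (Γ (t + 1)) ω).toReal + c t (A t ω)))
      (contractPay P T R
        (fun ω => ∑ t ∈ Finset.range T,
          (Γ (t + 1) ω - (Ua t (Γ (t + 1)) ω).toReal + c t (A t ω))) β A) := by
  classical
  have hle : ∀ {s t : ℕ}, s ≤ t → ℱ s ≤ ℱ t := fun hst => hmono _ _ hst
  -- measurability of relative increments
  have hrel : ∀ s, s < T → ∀ i, Measurable[ℱ (s+1)] (relIncr P s i) := by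
    intro s hs i
    have h1 : Measurable[ℱ (s+1)] fun ω => P (s+1) ω i :=
      (measurable_pi_apply i).comp (hPadapted (s+1) hs)
    have h2 : Measurable[ℱ (s+1)] fun ω => P s ω i :=
      ((measurable_pi_apply i).comp (hPadapted s hs.le)).mono (hle (Nat.le_succ s)) le_rfl
    unfold relIncr
    exact (h1.sub h2).div h2
  have hdot : ∀ s, s < T → ∀ (a : Ω → Fin N → ℝ), (∀ i, Measurable[ℱ s] fun ω => a ω i) →
      Measurable[ℱ (s+1)] (fun ω => ∑ i, a ω i * relIncr P s i ω) := by
    intro s hs a ha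
    exact Finset.measurable_sum _ fun i _ =>
      ((ha i).mono (hle (Nat.le_succ s)) le_rfl).mul (hrel s hs i)
  have hAi : ∀ s, s < T → ∀ i, Measurable[ℱ s] fun ω => A s ω i := fun s hs i =>
    (measurable_pi_apply i).comp (hA s hs)
  have hcm : ∀ s, s < T → Measurable (c s) := by
    intro s hs
    have hcont : ContinuousOn (c s) Set.univ := ((hc s hs).convexOn).continuousOn isOpen_univ
    exact (continuousOn_univ.mp hcont).measurable
  have hΓT : ∀ s, s < T → Measurable[ℱ T] (Γ (s+1)) := fun s hs =>
    (hΓ s hs).mono (hle hs) le_rfl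
  have hdotT : ∀ s, s < T → ∀ (a : Ω → Fin N → ℝ), (∀ i, Measurable[ℱ s] fun ω => a ω i) →
      Measurable[ℱ T] (fun ω => ∑ i, a ω i * relIncr P s i ω) := fun s hs a ha =>
    (hdot s hs a ha).mono (hle hs) le_rfl
  have hFtm : ∀ t, t < T → Measurable[ℱ T]
      (fun ω' => h (t + 1) ω' + (∑ i, A t ω' i * relIncr P t i ω') - Γ (t + 1) ω') := by
    intro t ht
    exact (((hhmeas (t+1) ht).mono (hle ht) le_rfl).add (hdotT t ht (A t) (hAi t ht))).sub
      (hΓT t ht)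
  -- finiteness facts from the attainment of the Principal's recursion
  have hfin : ∀ t, t < T → ∀ᵐ ω ∂μ,
      Ua t (Γ (t+1)) ω = (((Ua t (Γ (t+1)) ω).toReal : ℝ) : EReal) ∧
      Up t (fun ω' => h (t + 1) ω' + (∑ i, A t ω' i * relIncr P t i ω') - Γ (t + 1) ω') ω
        = ((h t ω - (Ua t (Γ (t+1)) ω).toReal + c t (A t ω) : ℝ) : EReal) := by
    intro t ht
    have h1 := hattain t ht
    simp only [principalVal] at h1
    filter_upwards [h1, hUa.properTop t ht.le (Γ (t+1)) (hΓT t ht),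
      hUp.properTop t ht.le _ (hFtm t ht)] with ω e1 e2 e3
    have hxb : Ua t (Γ (t+1)) ω ≠ ⊥ := by
      intro hb
      rw [hb, EReal.bot_add, EReal.bot_add] at e1
      exact absurd e1 (by simp)
    rw [← EReal.coe_toReal e2 hxb, ← EReal.coe_add] at e1
    have hzb : Up t (fun ω' => h (t + 1) ω' + (∑ i, A t ω' i * relIncr P t i ω')
        - Γ (t + 1) ω') ω ≠ ⊥ := by
      intro hb
      rw [hb, EReal.add_bot] at e1
      exact absurd e1 (by simp)
    refine ⟨(EReal.coe_toReal e2 hxb).symm, ?_⟩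
    rw [ereal_coe_add_eq e1, EReal.coe_eq_coe_iff]
    ring
  -- the Agent's value process for the proposed contract
  set H : ℕ → Ω → ℝ := fun t ω => R + ∑ s ∈ Finset.range t,
      (Γ (s+1) ω - (Ua s (Γ (s+1)) ω).toReal + c s (A s ω)
        - β s ω * ∑ i, A s ω i * relIncr P s i ω) with Hdef
  have measH : ∀ t, t ≤ T → Measurable[ℱ t] (H t) := by
    intro t ht
    simp only [Hdef]
    refine measurable_const.add (Finset.measurable_sum _ fun s hs => ?_)
    rw [Finset.mem_range] at hs
    have hsT : s < T := lt_of_lt_of_le hs ht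
    have hΓt : Measurable[ℱ t] (Γ (s+1)) := (hΓ s hsT).mono (hle hs) le_rfl
    have hus : Measurable[ℱ t] (fun ω => (Ua s (Γ (s+1)) ω).toReal) :=
      (Measurable.ereal_toReal (hUa.meas s hsT.le _ (hΓT s hsT))).mono (hle hs.le) le_rfl
    have hcs : Measurable[ℱ t] (fun ω => c s (A s ω)) :=
      (hcm s hsT).comp ((hA s hsT).mono (hle hs.le) le_rfl)
    have hβs : Measurable[ℱ t] (β s) := (hβ s hsT).mono (hle hs.le) le_rfl
    have hds : Measurable[ℱ t] (fun ω => ∑ i, A s ω i * relIncr P s i ω) :=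
      (hdot s hsT (A s) (hAi s hsT)).mono (hle hs) le_rfl
    exact ((hΓt.sub hus).add hcs).sub (hβs.mul hds)
  -- one-step decomposition of the Agent's objective
  have step1 : ∀ t, t < T → ∀ a : Ω → Fin N → ℝ, Measurable[ℱ t] a →
      ∀ᵐ ω ∂μ,
        Ua t (fun ω' => H (t + 1) ω' + β t ω' * ∑ i, a ω' i * relIncr P t i ω') ω =
          Ua t (fun ω' => Γ (t+1) ω' + β t ω' *
              ∑ i, (a ω' i - A t ω' i) * relIncr P t i ω') ω
            + ((H t ω - (Ua t (Γ (t+1)) ω).toReal + c t (A t ω) : ℝ) : EReal) := by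
    intro t ht a ha
    have hsub : ∀ i, Measurable[ℱ t] fun ω => a ω i - A t ω i := fun i =>
      ((measurable_pi_apply i).comp ha).sub ((measurable_pi_apply i).comp (hA t ht))
    have hXm : Measurable[ℱ T]
        (fun ω' => Γ (t+1) ω' + β t ω' * ∑ i, (a ω' i - A t ω' i) * relIncr P t i ω') :=
      (hΓT t ht).add (((hβ t ht).mono (hle ht.le) le_rfl).mul (hdotT t ht _ hsub))
    have hKm : Measurable[ℱ t]
        (fun ω => H t ω - (Ua t (Γ (t+1)) ω).toReal + c t (A t ω)) := by
      have hus : Measurable[ℱ t] (fun ω => (Ua t (Γ (t+1)) ω).toReal) :=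
        Measurable.ereal_toReal (hUa.meas t ht.le _ (hΓT t ht))
      exact ((measH t ht.le).sub hus).add ((hcm t ht).comp (hA t ht))
    have hfe : (fun ω' => H (t + 1) ω' + β t ω' * ∑ i, a ω' i * relIncr P t i ω')
        = fun ω' => (Γ (t+1) ω' + β t ω' * ∑ i, (a ω' i - A t ω' i) * relIncr P t i ω')
            + (H t ω' - (Ua t (Γ (t+1)) ω').toReal + c t (A t ω')) := by
      funext ω'
      simp only [Hdef, Finset.sum_range_succ, sub_mul, Finset.sum_sub_distrib]
      ring
    rw [hfe]
    exact hUa.transInv t ht.le _ _ hXm hKm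
  -- the Agent's recursion: upper bound
  have hub : ∀ t, t < T → ∀ a : Ω → Fin N → ℝ, Measurable[ℱ t] a →
      ∀ᵐ ω ∂μ,
        Ua t (fun ω' => H (t + 1) ω' + β t ω' * ∑ i, a ω' i * relIncr P t i ω') ω +
            ((-(c t (a ω)) : ℝ) : EReal) ≤ ((H t ω : ℝ) : EReal) := by
    intro t ht a ha
    filter_upwards [step1 t ht a ha, (hfeas t ht).2.2 a ha, hfin t ht] with ω e1 e2 e3
    rw [e1]
    have e2' : Ua t (fun ω' => Γ (t+1) ω' + β t ω' *
          ∑ i, (a ω' i - A t ω' i) * relIncr P t i ω') ω + ((-(c t (a ω)) : ℝ) : EReal)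
        ≤ (((Ua t (Γ (t+1)) ω).toReal - c t (A t ω) : ℝ) : EReal) := by
      refine le_trans e2 ?_
      rw [e3.1, ← EReal.coe_add]
      simp only [EReal.toReal_coe]
      exact le_of_eq (by rw [EReal.coe_eq_coe_iff]; ring)
    rw [add_right_comm]
    refine le_trans (add_le_add_left e2'
      ((H t ω - (Ua t (Γ (t+1)) ω).toReal + c t (A t ω) : ℝ) : EReal)) ?_
    rw [← EReal.coe_add]
    exact le_of_eq (by rw [EReal.coe_eq_coe_iff]; ring)
  -- the Agent's recursion: attainment at A
  have hat : ∀ t, t < T → ∀ᵐ ω ∂μ,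
      Ua t (fun ω' => H (t + 1) ω' + β t ω' * ∑ i, A t ω' i * relIncr P t i ω') ω +
          ((-(c t (A t ω)) : ℝ) : EReal) = ((H t ω : ℝ) : EReal) := by
    intro t ht
    have hXid : (fun ω' => Γ (t+1) ω' + β t ω' *
        ∑ i, (A t ω' i - A t ω' i) * relIncr P t i ω') = Γ (t+1) := by
      funext ω'; simp
    filter_upwards [step1 t ht (A t) (hA t ht), hfin t ht] with ω e1 e2
    rw [e1, hXid, e2.1]
    simp only [EReal.toReal_coe]
    rw [← EReal.coe_add, ← EReal.coe_add, EReal.coe_eq_coe_iff]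
    ring
  -- measurability of the Agent's running objective
  have measXb : ∀ (Abar : ℕ → Ω → Fin N → ℝ), (∀ t, t < T → Measurable[ℱ t] (Abar t)) →
      ∀ t, t ≤ T → Measurable[ℱ t] (fun ω => H t ω + ∑ s ∈ Finset.range t,
        (β s ω * ∑ i, Abar s ω i * relIncr P s i ω - c s (Abar s ω))) := by
    intro Abar hAb t ht
    refine (measH t ht).add (Finset.measurable_sum _ fun s hs => ?_)
    rw [Finset.mem_range] at hs
    have hsT : s < T := lt_of_lt_of_le hs ht
    exact (((hβ s hsT).mono (hle hs.le) le_rfl).mul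
        ((hdot s hsT (Abar s) (fun i => (measurable_pi_apply i).comp (hAb s hsT))).mono
          (hle hs) le_rfl)).sub
      ((hcm s hsT).comp ((hAb s hsT).mono (hle hs.le) le_rfl))
  -- the supermartingale bound for the Agent
  have agentBound : ∀ (Abar : ℕ → Ω → Fin N → ℝ), (∀ t, t < T → Measurable[ℱ t] (Abar t)) →
      ∀ t, t ≤ T → ∀ᵐ ω ∂μ,
        Ua t (fun ω' => H T ω' + ∑ s ∈ Finset.range T,
            (β s ω' * ∑ i, Abar s ω' i * relIncr P s i ω' - c s (Abar s ω'))) ω ≤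
          ((H t ω + ∑ s ∈ Finset.range t,
            (β s ω * ∑ i, Abar s ω i * relIncr P s i ω - c s (Abar s ω)) : ℝ) : EReal) := by
    intro Abar hAb
    refine downward_induction ?_ ?_
    · filter_upwards [usual_eval hUa le_rfl (measXb Abar hAb T le_rfl)] with ω e
      rw [e]
    · intro t ht IH
      have hF : Measurable[ℱ T]
          (fun ω' => H (t + 1) ω' + β t ω' * ∑ i, Abar t ω' i * relIncr P t i ω') :=
        ((measH (t+1) ht).mono (hle ht) le_rfl).add
          (((hβ t ht).mono (hle ht.le) le_rfl).mul
            (hdotT t ht (Abar t) (fun i => (measurable_pi_apply i).comp (hAb t ht))))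
      have hXt1 := measXb Abar hAb (t+1) ht
      have hXT := measXb Abar hAb T le_rfl
      have hcmp : ∀ᵐ ω ∂μ,
          Ua (t+1) (fun ω' => H T ω' + ∑ s ∈ Finset.range T,
            (β s ω' * ∑ i, Abar s ω' i * relIncr P s i ω' - c s (Abar s ω'))) ω ≤
          Ua (t+1) (fun ω' => H (t+1) ω' + ∑ s ∈ Finset.range (t+1),
            (β s ω' * ∑ i, Abar s ω' i * relIncr P s i ω' - c s (Abar s ω'))) ω := by
        filter_upwards [IH, usual_eval hUa ht hXt1] with ω e1 e2
        rw [e2]; exact e1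
      have htc := hUa.timeConsistent t ht _ _ (hXt1.mono (hle ht) le_rfl) hXT hcmp
      have hfe2 : (fun ω' => H (t+1) ω' + ∑ s ∈ Finset.range (t+1),
            (β s ω' * ∑ i, Abar s ω' i * relIncr P s i ω' - c s (Abar s ω')))
          = fun ω' => (H (t + 1) ω' + β t ω' * ∑ i, Abar t ω' i * relIncr P t i ω')
              + (∑ s ∈ Finset.range t,
                  (β s ω' * ∑ i, Abar s ω' i * relIncr P s i ω' - c s (Abar s ω'))
                - c t (Abar t ω')) := by
        funext ω'; rw [Finset.sum_range_succ]; ring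
      have hK2 : Measurable[ℱ t] (fun ω => ∑ s ∈ Finset.range t,
          (β s ω * ∑ i, Abar s ω i * relIncr P s i ω - c s (Abar s ω)) - c t (Abar t ω)) := by
        refine Measurable.sub ?_ ((hcm t ht).comp (hAb t ht))
        refine Finset.measurable_sum _ fun s hs => ?_
        rw [Finset.mem_range] at hs
        have hsT : s < T := lt_trans hs ht
        exact (((hβ s hsT).mono (hle hs.le) le_rfl).mul
          ((hdot s hsT (Abar s) (fun i => (measurable_pi_apply i).comp (hAb s hsT))).mono
            (hle hs) le_rfl)).sub ((hcm s hsT).comp ((hAb s hsT).mono (hle hs.le) le_rfl))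
      have htr := hUa.transInv t ht.le
        (fun ω' => H (t + 1) ω' + β t ω' * ∑ i, Abar t ω' i * relIncr P t i ω')
        (fun ω => ∑ s ∈ Finset.range t,
          (β s ω * ∑ i, Abar s ω i * relIncr P s i ω - c s (Abar s ω)) - c t (Abar t ω))
        hF hK2
      filter_upwards [htc, htr, hub t ht (Abar t) (hAb t ht)] with ω e1 e2 e3
      rw [hfe2] at e1
      refine le_trans e1 ?_
      rw [e2]
      have hsplit : ((∑ s ∈ Finset.range t,
            (β s ω * ∑ i, Abar s ω i * relIncr P s i ω - c s (Abar s ω))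
            - c t (Abar t ω) : ℝ) : EReal)
          = ((-(c t (Abar t ω)) : ℝ) : EReal) + ((∑ s ∈ Finset.range t,
            (β s ω * ∑ i, Abar s ω i * relIncr P s i ω - c s (Abar s ω)) : ℝ) : EReal) := by
        rw [← EReal.coe_add, EReal.coe_eq_coe_iff]; ring
      rw [hsplit, ← add_assoc]
      refine le_trans (add_le_add_left e3 _) ?_
      rw [← EReal.coe_add]
  -- the Agent's value under the recommended effort
  have agentEq : ∀ t, t ≤ T → ∀ᵐ ω ∂μ,
      Ua t (fun ω' => H T ω' + ∑ s ∈ Finset.range T,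
          (β s ω' * ∑ i, A s ω' i * relIncr P s i ω' - c s (A s ω'))) ω =
        ((H t ω + ∑ s ∈ Finset.range t,
          (β s ω * ∑ i, A s ω i * relIncr P s i ω - c s (A s ω)) : ℝ) : EReal) := by
    refine downward_induction ?_ ?_
    · filter_upwards [usual_eval hUa le_rfl (measXb A hA T le_rfl)] with ω e
      rw [e]
    · intro t ht IH
      have hF : Measurable[ℱ T]
          (fun ω' => H (t + 1) ω' + β t ω' * ∑ i, A t ω' i * relIncr P t i ω') :=
        ((measH (t+1) ht).mono (hle ht) le_rfl).add
          (((hβ t ht).mono (hle ht.le) le_rfl).mul (hdotT t ht (A t) (hAi t ht)))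
      have hXt1 := measXb A hA (t+1) ht
      have hXT := measXb A hA T le_rfl
      have hcmp : ∀ᵐ ω ∂μ,
          Ua (t+1) (fun ω' => H T ω' + ∑ s ∈ Finset.range T,
            (β s ω' * ∑ i, A s ω' i * relIncr P s i ω' - c s (A s ω'))) ω =
          Ua (t+1) (fun ω' => H (t+1) ω' + ∑ s ∈ Finset.range (t+1),
            (β s ω' * ∑ i, A s ω' i * relIncr P s i ω' - c s (A s ω'))) ω := by
        filter_upwards [IH, usual_eval hUa ht hXt1] with ω e1 e2
        rw [e1, e2]
      have htc := usual_tcEq hUa ht (hXt1.mono (hle ht) le_rfl) hXT hcmp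
      have hfe2 : (fun ω' => H (t+1) ω' + ∑ s ∈ Finset.range (t+1),
            (β s ω' * ∑ i, A s ω' i * relIncr P s i ω' - c s (A s ω')))
          = fun ω' => (H (t + 1) ω' + β t ω' * ∑ i, A t ω' i * relIncr P t i ω')
              + (∑ s ∈ Finset.range t,
                  (β s ω' * ∑ i, A s ω' i * relIncr P s i ω' - c s (A s ω'))
                - c t (A t ω')) := by
        funext ω'; rw [Finset.sum_range_succ]; ring
      have hK2 : Measurable[ℱ t] (fun ω => ∑ s ∈ Finset.range t,
          (β s ω * ∑ i, A s ω i * relIncr P s i ω - c s (A s ω)) - c t (A t ω)) := by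
        refine Measurable.sub ?_ ((hcm t ht).comp (hA t ht))
        refine Finset.measurable_sum _ fun s hs => ?_
        rw [Finset.mem_range] at hs
        have hsT : s < T := lt_trans hs ht
        exact (((hβ s hsT).mono (hle hs.le) le_rfl).mul
          ((hdot s hsT (A s) (hAi s hsT)).mono (hle hs) le_rfl)).sub
          ((hcm s hsT).comp ((hA s hsT).mono (hle hs.le) le_rfl))
      have htr := hUa.transInv t ht.le
        (fun ω' => H (t + 1) ω' + β t ω' * ∑ i, A t ω' i * relIncr P t i ω')
        (fun ω => ∑ s ∈ Finset.range t,
          (β s ω * ∑ i, A s ω i * relIncr P s i ω - c s (A s ω)) - c t (A t ω))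
        hF hK2
      filter_upwards [htc, htr, hat t ht] with ω e1 e2 e3
      rw [e1, hfe2, e2, ereal_add_neg_coe_eq e3, ← EReal.coe_add, EReal.coe_eq_coe_iff]
      ring
  -- the Principal's running value process
  have measZ : ∀ t, t ≤ T → Measurable[ℱ t] (fun ω => W0 - R + h t ω +
      ∑ s ∈ Finset.range t, ((∑ i, A s ω i * relIncr P s i ω) - Γ (s+1) ω
        + (Ua s (Γ (s+1)) ω).toReal - c s (A s ω))) := by
    intro t ht
    refine (measurable_const.add (hhmeas t ht)).add (Finset.measurable_sum _ fun s hs => ?_)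
    rw [Finset.mem_range] at hs
    have hsT : s < T := lt_of_lt_of_le hs ht
    have h1 : Measurable[ℱ t] (fun ω => ∑ i, A s ω i * relIncr P s i ω) :=
      (hdot s hsT (A s) (hAi s hsT)).mono (hle hs) le_rfl
    have h2 : Measurable[ℱ t] (Γ (s+1)) := (hΓ s hsT).mono (hle hs) le_rfl
    have h3 : Measurable[ℱ t] (fun ω => (Ua s (Γ (s+1)) ω).toReal) :=
      (Measurable.ereal_toReal (hUa.meas s hsT.le _ (hΓT s hsT))).mono (hle hs.le) le_rfl
    have h4 : Measurable[ℱ t] (fun ω => c s (A s ω)) :=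
      (hcm s hsT).comp ((hA s hsT).mono (hle hs.le) le_rfl)
    exact ((h1.sub h2).add h3).sub h4
  have hZfm : Measurable[ℱ T] (fun ω' => wealth P W0 A T ω' - contractPay P T R
      (fun ω => ∑ t ∈ Finset.range T,
        (Γ (t + 1) ω - (Ua t (Γ (t + 1)) ω).toReal + c t (A t ω))) β A A ω') := by
    have hw : Measurable[ℱ T] (wealth P W0 A T) := by
      refine measurable_const.add (Finset.measurable_sum _ fun s hs => ?_)
      rw [Finset.mem_range] at hs
      exact hdotT s hs (A s) (hAi s hs)
    have hth : Measurable[ℱ T] (fun ω => ∑ t ∈ Finset.range T,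
        (Γ (t + 1) ω - (Ua t (Γ (t + 1)) ω).toReal + c t (A t ω))) := by
      refine Finset.measurable_sum _ fun s hs => ?_
      rw [Finset.mem_range] at hs
      exact ((hΓT s hs).sub
          (Measurable.ereal_toReal (hUa.meas s hs.le _ (hΓT s hs)) |>.mono (hle hs.le) le_rfl)).add
        ((hcm s hs).comp ((hA s hs).mono (hle hs.le) le_rfl))
    have hcp : Measurable[ℱ T] (contractPay P T R
        (fun ω => ∑ t ∈ Finset.range T,
          (Γ (t + 1) ω - (Ua t (Γ (t + 1)) ω).toReal + c t (A t ω))) β A A) := by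
      unfold contractPay
      refine (measurable_const.add hth).add (Finset.measurable_sum _ fun s hs => ?_)
      rw [Finset.mem_range] at hs
      refine ((hβ s hs).mono (hle hs.le) le_rfl).mul
        (hdotT s hs _ (fun i => ((hAi s hs i).sub (hAi s hs i))))
    exact hw.sub hcp
  have princEq : ∀ t, t ≤ T → ∀ᵐ ω ∂μ,
      Up t (fun ω' => wealth P W0 A T ω' - contractPay P T R
          (fun ω => ∑ t ∈ Finset.range T,
            (Γ (t + 1) ω - (Ua t (Γ (t + 1)) ω).toReal + c t (A t ω))) β A A ω') ω =
        ((W0 - R + h t ω + ∑ s ∈ Finset.range t,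
          ((∑ i, A s ω i * relIncr P s i ω) - Γ (s+1) ω
            + (Ua s (Γ (s+1)) ω).toReal - c s (A s ω)) : ℝ) : EReal) := by
    refine downward_induction ?_ ?_
    · filter_upwards [usual_eval hUp le_rfl hZfm, hhT] with ω e1 e2
      rw [e1, EReal.coe_eq_coe_iff]
      have e2' : h T ω = 0 := e2
      simp only [wealth, contractPay, e2', sub_self, zero_mul, Finset.sum_const_zero,
        mul_zero, Finset.sum_sub_distrib, Finset.sum_add_distrib]
      ring
    · intro t ht IH
      have hcmp : ∀ᵐ ω ∂μ,
          Up (t+1) (fun ω' => wealth P W0 A T ω' - contractPay P T R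
            (fun ω => ∑ t ∈ Finset.range T,
              (Γ (t + 1) ω - (Ua t (Γ (t + 1)) ω).toReal + c t (A t ω))) β A A ω') ω =
          Up (t+1) (fun ω => W0 - R + h (t+1) ω +
            ∑ s ∈ Finset.range (t+1), ((∑ i, A s ω i * relIncr P s i ω) - Γ (s+1) ω
              + (Ua s (Γ (s+1)) ω).toReal - c s (A s ω))) ω := by
        filter_upwards [IH, usual_eval hUp ht (measZ (t+1) ht)] with ω e1 e2
        rw [e1, e2]
      have htc := usual_tcEq hUp ht ((measZ (t+1) ht).mono (hle ht) le_rfl) hZfm hcmp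
      have hfe3 : (fun ω => W0 - R + h (t+1) ω +
            ∑ s ∈ Finset.range (t+1), ((∑ i, A s ω i * relIncr P s i ω) - Γ (s+1) ω
              + (Ua s (Γ (s+1)) ω).toReal - c s (A s ω)))
          = fun ω' => (h (t + 1) ω' + (∑ i, A t ω' i * relIncr P t i ω') - Γ (t + 1) ω')
              + (W0 - R + ∑ s ∈ Finset.range t, ((∑ i, A s ω' i * relIncr P s i ω')
                  - Γ (s+1) ω' + (Ua s (Γ (s+1)) ω').toReal - c s (A s ω'))
                + (Ua t (Γ (t+1)) ω').toReal - c t (A t ω')) := by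
        funext ω'; rw [Finset.sum_range_succ]; ring
      have hK3 : Measurable[ℱ t] (fun ω' => W0 - R
          + ∑ s ∈ Finset.range t, ((∑ i, A s ω' i * relIncr P s i ω')
              - Γ (s+1) ω' + (Ua s (Γ (s+1)) ω').toReal - c s (A s ω'))
            + (Ua t (Γ (t+1)) ω').toReal - c t (A t ω')) := by
      
        have h3 : Measurable[ℱ t] (fun ω => (Ua t (Γ (t+1)) ω).toReal) :=
          Measurable.ereal_toReal (hUa.meas t ht.le _ (hΓT t ht))
        have h4 : Measurable[ℱ t] (fun ω => c t (A t ω)) := (hcm t ht).comp (hA t ht)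
        have h5 : Measurable[ℱ t] (fun ω => ∑ s ∈ Finset.range t,
            ((∑ i, A s ω i * relIncr P s i ω) - Γ (s+1) ω
              + (Ua s (Γ (s+1)) ω).toReal - c s (A s ω))) := by
          refine Finset.measurable_sum _ fun s hs => ?_
          rw [Finset.mem_range] at hs
          have hsT : s < T := lt_trans hs ht
          exact ((((hdot s hsT (A s) (hAi s hsT)).mono (hle hs) le_rfl).sub
              ((hΓ s hsT).mono (hle hs) le_rfl)).add
            ((Measurable.ereal_toReal (hUa.meas s hsT.le _ (hΓT s hsT))).mono
              (hle hs.le) le_rfl)).sub ((hcm s hsT).comp ((hA s hsT).mono (hle hs.le) le_rfl))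
        exact ((measurable_const.add h5).add h3).sub h4
      have htr := hUp.transInv t ht.le
        (fun ω' => h (t + 1) ω' + (∑ i, A t ω' i * relIncr P t i ω') - Γ (t + 1) ω')
        (fun ω' => W0 - R + ∑ s ∈ Finset.range t, ((∑ i, A s ω' i * relIncr P s i ω')
            - Γ (s+1) ω' + (Ua s (Γ (s+1)) ω').toReal - c s (A s ω'))
          + (Ua t (Γ (t+1)) ω').toReal - c t (A t ω'))
        (hFtm t ht) hK3
      filter_upwards [htc, htr, hfin t ht] with ω e1 e2 e3
      rw [e1, hfe3, e2, e3.2, ← EReal.coe_add, EReal.coe_eq_coe_iff]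
      ring
  refine ⟨⟨H, ⟨measH, hA, ?_, hub, hat⟩, ?_⟩, ?_, ?_, ?_, ?_⟩
  · -- terminal condition
    refine Filter.Eventually.of_forall fun ω => ?_
    simp only [Hdef, Finset.sum_sub_distrib, Finset.sum_add_distrib]
    ring
  · -- H 0 = R
    refine Filter.Eventually.of_forall fun ω => ?_
    simp [Hdef]
  · -- (2) any adapted effort gives the Agent at most R
    intro Abar hAb
    have hpay : (fun ω' => contractPay P T R
          (fun ω => ∑ t ∈ Finset.range T,
            (Γ (t + 1) ω - (Ua t (Γ (t + 1)) ω).toReal + c t (A t ω))) β A Abar ω'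
          - ∑ t ∈ Finset.range T, c t (Abar t ω'))
        = fun ω' => H T ω' + ∑ s ∈ Finset.range T,
            (β s ω' * ∑ i, Abar s ω' i * relIncr P s i ω' - c s (Abar s ω')) := by
      funext ω'
      simp only [contractPay, Hdef, sub_mul, mul_sub, Finset.sum_sub_distrib,
        Finset.sum_add_distrib]
      ring
    rw [hpay]
    filter_upwards [agentBound Abar hAb 0 (Nat.zero_le T)] with ω e
    refine le_trans e ?_
    simp [Hdef]
  · -- the recommended effort attains R
    have hpay : (fun ω' => contractPay P T R
          (fun ω => ∑ t ∈ Finset.range T,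
            (Γ (t + 1) ω - (Ua t (Γ (t + 1)) ω).toReal + c t (A t ω))) β A A ω'
          - ∑ t ∈ Finset.range T, c t (A t ω'))
        = fun ω' => H T ω' + ∑ s ∈ Finset.range T,
            (β s ω' * ∑ i, A s ω' i * relIncr P s i ω' - c s (A s ω')) := by
      funext ω'
      simp only [contractPay, Hdef, sub_mul, mul_sub, Finset.sum_sub_distrib,
        Finset.sum_add_distrib]
      ring
    rw [hpay]
    filter_upwards [agentEq 0 (Nat.zero_le T)] with ω e
    rw [e]
    simp [Hdef]
  · -- (3) the Principal's value of the proposed contract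
    filter_upwards [princEq 0 (Nat.zero_le T)] with ω e
    rw [e]
    simp
  · -- (4) optimality among IC and IR contracts
    intro Θ'' hΘ'' β'' hβ'' H'' Ahat'' AS hIR
    have hAi'' : ∀ s, s < T → ∀ i, Measurable[ℱ s] fun ω => Ahat'' s ω i := fun s hs i =>
      (measurable_pi_apply i).comp (AS.measA s hs)
    have memic : ∀ t, t < T → MemIC μ ℱ P Ua c t (β'' t) (Ahat'' t)
        (fun ω => H'' (t+1) ω + β'' t ω * ∑ i, Ahat'' t ω i * relIncr P t i ω) := by
      intro t ht
      refine ⟨AS.measA t ht, ?_, ?_⟩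
      · exact (AS.measH (t+1) ht).add
          (((hβ'' t ht).mono (hle (Nat.le_succ t)) le_rfl).mul
            (hdot t ht (Ahat'' t) (hAi'' t ht)))
      · intro abar habar
        have hfe : (fun ω' => (H'' (t+1) ω' + β'' t ω' * ∑ i, Ahat'' t ω' i * relIncr P t i ω')
              + β'' t ω' * ∑ i, (abar ω' i - Ahat'' t ω' i) * relIncr P t i ω')
            = fun ω' => H'' (t + 1) ω' + β'' t ω' * ∑ i, abar ω' i * relIncr P t i ω' := by
          funext ω'
          simp only [sub_mul, Finset.sum_sub_distrib]
          ring
        filter_upwards [AS.upperBound t ht abar habar, AS.attained t ht] with ω e1 e2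
        rw [hfe]
        refine le_trans e1 ?_
        rw [← e2]
    have hbound : ∀ t, t < T → ∀ᵐ ω ∂μ,
        Up t (fun ω' => h (t + 1) ω' + (∑ i, Ahat'' t ω' i * relIncr P t i ω')
            - (H'' (t+1) ω' + β'' t ω' * ∑ i, Ahat'' t ω' i * relIncr P t i ω')) ω
          ≤ ((h t ω - H'' t ω : ℝ) : EReal) := by
      intro t ht
      have hd := hdomin t ht (β'' t) (hβ'' t ht) (Ahat'' t) _ (memic t ht)
      simp only [principalVal] at hd
      filter_upwards [hd, AS.attained t ht] with ω e1 e2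
      rw [e2] at e1
      exact ereal_coe_add_le_iff.mp e1
    have hZfbm : Measurable[ℱ T] (fun ω' => wealth P W0 Ahat'' T ω'
        - (Θ'' ω' + ∑ t ∈ Finset.range T,
            β'' t ω' * ∑ i, Ahat'' t ω' i * relIncr P t i ω')) := by
      have hw : Measurable[ℱ T] (wealth P W0 Ahat'' T) := by
        refine measurable_const.add (Finset.measurable_sum _ fun s hs => ?_)
        rw [Finset.mem_range] at hs
        exact hdotT s hs (Ahat'' s) (hAi'' s hs)
      refine hw.sub (hΘ''.add (Finset.measurable_sum _ fun s hs => ?_))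
      rw [Finset.mem_range] at hs
      exact ((hβ'' s hs).mono (hle hs.le) le_rfl).mul (hdotT s hs (Ahat'' s) (hAi'' s hs))
    have measZb : ∀ t, t ≤ T → Measurable[ℱ t] (fun ω => W0 - H'' t ω + h t ω +
        ∑ s ∈ Finset.range t, ((∑ i, Ahat'' s ω i * relIncr P s i ω)
          - β'' s ω * ∑ i, Ahat'' s ω i * relIncr P s i ω)) := by
      intro t ht
      refine ((measurable_const.sub (AS.measH t ht)).add (hhmeas t ht)).add
        (Finset.measurable_sum _ fun s hs => ?_)
      rw [Finset.mem_range] at hs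
      have hsT : s < T := lt_of_lt_of_le hs ht
      have hd1 : Measurable[ℱ t] (fun ω => ∑ i, Ahat'' s ω i * relIncr P s i ω) :=
        (hdot s hsT (Ahat'' s) (hAi'' s hsT)).mono (hle hs) le_rfl
      exact hd1.sub (((hβ'' s hsT).mono (hle hs.le) le_rfl).mul hd1)
    have princBound : ∀ t, t ≤ T → ∀ᵐ ω ∂μ,
        Up t (fun ω' => wealth P W0 Ahat'' T ω'
          - (Θ'' ω' + ∑ t ∈ Finset.range T,
              β'' t ω' * ∑ i, Ahat'' t ω' i * relIncr P t i ω')) ω ≤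
          ((W0 - H'' t ω + h t ω + ∑ s ∈ Finset.range t,
            ((∑ i, Ahat'' s ω i * relIncr P s i ω)
              - β'' s ω * ∑ i, Ahat'' s ω i * relIncr P s i ω) : ℝ) : EReal) := by
      refine downward_induction ?_ ?_
      · filter_upwards [usual_eval hUp le_rfl hZfbm, AS.terminal, hhT] with ω e1 e2 e3
        rw [e1, EReal.coe_le_coe_iff]
        have e3' : h T ω = 0 := e3
        refine le_of_eq ?_
        simp only [wealth, e2, e3', Finset.sum_sub_distrib]
        ring
      · intro t ht IH
        have hcmp : ∀ᵐ ω ∂μ,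
            Up (t+1) (fun ω' => wealth P W0 Ahat'' T ω'
              - (Θ'' ω' + ∑ t ∈ Finset.range T,
                  β'' t ω' * ∑ i, Ahat'' t ω' i * relIncr P t i ω')) ω ≤
            Up (t+1) (fun ω => W0 - H'' (t+1) ω + h (t+1) ω +
              ∑ s ∈ Finset.range (t+1), ((∑ i, Ahat'' s ω i * relIncr P s i ω)
                - β'' s ω * ∑ i, Ahat'' s ω i * relIncr P s i ω)) ω := by
          filter_upwards [IH, usual_eval hUp ht (measZb (t+1) ht)] with ω e1 e2
          rw [e2]; exact e1
        have htc := hUp.timeConsistent t ht _ _ ((measZb (t+1) ht).mono (hle ht) le_rfl)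
          hZfbm hcmp
        have hfe4 : (fun ω => W0 - H'' (t+1) ω + h (t+1) ω +
              ∑ s ∈ Finset.range (t+1), ((∑ i, Ahat'' s ω i * relIncr P s i ω)
                - β'' s ω * ∑ i, Ahat'' s ω i * relIncr P s i ω))
            = fun ω' => (h (t + 1) ω' + (∑ i, Ahat'' t ω' i * relIncr P t i ω')
                - (H'' (t+1) ω' + β'' t ω' * ∑ i, Ahat'' t ω' i * relIncr P t i ω'))
              + (W0 + ∑ s ∈ Finset.range t, ((∑ i, Ahat'' s ω' i * relIncr P s i ω')
                - β'' s ω' * ∑ i, Ahat'' s ω' i * relIncr P s i ω')) := by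
          funext ω'; rw [Finset.sum_range_succ]; ring
        have hFbm : Measurable[ℱ T] (fun ω' => h (t + 1) ω'
            + (∑ i, Ahat'' t ω' i * relIncr P t i ω')
            - (H'' (t+1) ω' + β'' t ω' * ∑ i, Ahat'' t ω' i * relIncr P t i ω')) := by
          have hd1 : Measurable[ℱ T] (fun ω => ∑ i, Ahat'' t ω i * relIncr P t i ω) :=
            hdotT t ht (Ahat'' t) (hAi'' t ht)
          exact (((hhmeas (t+1) ht).mono (hle ht) le_rfl).add hd1).sub
            (((AS.measH (t+1) ht).mono (hle ht) le_rfl).add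
              (((hβ'' t ht).mono (hle ht.le) le_rfl).mul hd1))
        have hK4m : Measurable[ℱ t] (fun ω' => W0 + ∑ s ∈ Finset.range t,
            ((∑ i, Ahat'' s ω' i * relIncr P s i ω')
              - β'' s ω' * ∑ i, Ahat'' s ω' i * relIncr P s i ω')) := by
          refine measurable_const.add (Finset.measurable_sum _ fun s hs => ?_)
          rw [Finset.mem_range] at hs
          have hsT : s < T := lt_trans hs ht
          have hd1 : Measurable[ℱ t] (fun ω => ∑ i, Ahat'' s ω i * relIncr P s i ω) :=
            (hdot s hsT (Ahat'' s) (hAi'' s hsT)).mono (hle hs) le_rfl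
          exact hd1.sub (((hβ'' s hsT).mono (hle hs.le) le_rfl).mul hd1)
        have htr := hUp.transInv t ht.le
          (fun ω' => h (t + 1) ω' + (∑ i, Ahat'' t ω' i * relIncr P t i ω')
            - (H'' (t+1) ω' + β'' t ω' * ∑ i, Ahat'' t ω' i * relIncr P t i ω'))
          (fun ω' => W0 + ∑ s ∈ Finset.range t, ((∑ i, Ahat'' s ω' i * relIncr P s i ω')
            - β'' s ω' * ∑ i, Ahat'' s ω' i * relIncr P s i ω'))
          hFbm hK4m
        filter_upwards [htc, htr, hbound t ht] with ω e1 e2 e3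
        refine le_trans e1 ?_
        rw [hfe4, e2]
        refine le_trans (add_le_add_left e3 _) ?_
        rw [← EReal.coe_add]
        exact le_of_eq (by rw [EReal.coe_eq_coe_iff]; ring)
    filter_upwards [princBound 0 (Nat.zero_le T), hIR] with ω e1 e2
    refine le_trans e1 ?_
    rw [EReal.coe_le_coe_iff]
    simp only [Finset.range_zero, Finset.sum_empty, add_zero]
    linarith
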